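/- Let D be a nonempty open connected subset of the real quaternions ℍ and let f : ℍ → ℍ. Suppose that for every q ∈ D the limit of (f(q+h) − f(q))·h⁻¹ as h → 0 (h ≠ 0, q + h ∈ D) exists in ℍ. Then there exist constants ω, λ ∈ ℍ such that f(q) = ω·q + λ for all q ∈ D. -/

import Mathlib

open Quaternion Filter Topology Asymptotics
open Metric

noncomputable section

/-- The imaginary unit `i` of the real quaternions. -/
def qI : ℍ[ℝ] := ⟨0, 1, 0, 0⟩
/-- The imaginary unit `j` of the real quaternions. -/
def qJ : ℍ[ℝ] := ⟨0, 0, 1, 0⟩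
/-- The imaginary unit `k` of the real quaternions. -/
def qK : ℍ[ℝ] := ⟨0, 0, 0, 1⟩

/-- Quaternion rotation `p ↦ μ p μ⁻¹`. -/
def qRot (μ p : ℍ[ℝ]) : ℍ[ℝ] := μ * p * μ⁻¹

/-- The left GHR derivative `∂f/∂q^μ` at `q`. -/
def lD (f : ℍ[ℝ] → ℍ[ℝ]) (μ q : ℍ[ℝ]) : ℍ[ℝ] :=
  (4 : ℍ[ℝ])⁻¹ * (fderiv ℝ f q 1 - fderiv ℝ f q qI * qRot μ qI
    - fderiv ℝ f q qJ * qRot μ qJ - fderiv ℝ f q qK * qRot μ qK)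

/-- The left conjugate GHR derivative `∂f/∂q^{μ*}` at `q`. -/
def lDc (f : ℍ[ℝ] → ℍ[ℝ]) (μ q : ℍ[ℝ]) : ℍ[ℝ] :=
  (4 : ℍ[ℝ])⁻¹ * (fderiv ℝ f q 1 + fderiv ℝ f q qI * qRot μ qI
    + fderiv ℝ f q qJ * qRot μ qJ + fderiv ℝ f q qK * qRot μ qK)

/-- The right GHR derivative `∂ᵣf/∂q^μ` at `q`. -/
def rD (f : ℍ[ℝ] → ℍ[ℝ]) (μ q : ℍ[ℝ]) : ℍ[ℝ] :=
  (4 : ℍ[ℝ])⁻¹ * (fderiv ℝ f q 1 - qRot μ qI * fderiv ℝ f q qI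
    - qRot μ qJ * fderiv ℝ f q qJ - qRot μ qK * fderiv ℝ f q qK)

/-- The right conjugate GHR derivative `∂ᵣf/∂q^{μ*}` at `q`. -/
def rDc (f : ℍ[ℝ] → ℍ[ℝ]) (μ q : ℍ[ℝ]) : ℍ[ℝ] :=
  (4 : ℍ[ℝ])⁻¹ * (fderiv ℝ f q 1 + qRot μ qI * fderiv ℝ f q qI
    + qRot μ qJ * fderiv ℝ f q qJ + qRot μ qK * fderiv ℝ f q qK)

noncomputable def lm (a : ℍ[ℝ]) : ℍ[ℝ] →L[ℝ] ℍ[ℝ] := ContinuousLinearMap.mul ℝ ℍ[ℝ] a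

lemma hasFDerivAt_of_quotient {D : Set ℍ[ℝ]} (hD : IsOpen D) {f : ℍ[ℝ] → ℍ[ℝ]} {q L0 : ℍ[ℝ]}
    (hq : q ∈ D)
    (h : Filter.Tendsto (fun h : ℍ[ℝ] => (f (q + h) - f q) * h⁻¹)
      (𝓝[{h : ℍ[ℝ] | h ≠ 0 ∧ q + h ∈ D}] 0) (𝓝 L0)) :
    HasFDerivAt f (lm L0) q := by
  obtain ⟨ε, hε, hball⟩ := Metric.isOpen_iff.1 hD q hq
  rw [hasFDerivAt_iff_isLittleO_nhds_zero]
  rw [Asymptotics.isLittleO_iff]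
  intro c hc
  have h2 : ∀ᶠ x in 𝓝[{h : ℍ[ℝ] | h ≠ 0 ∧ q + h ∈ D}] 0,
      ‖(f (q + x) - f q) * x⁻¹ - L0‖ ≤ c := by
    filter_upwards [h (Metric.closedBall_mem_nhds L0 hc)] with x hx
    simpa [dist_eq_norm] using hx
  rw [eventually_nhdsWithin_iff] at h2
  filter_upwards [h2, Metric.ball_mem_nhds 0 hε] with x hx hxball
  rcases eq_or_ne x 0 with rfl | hx0
  · simp
  · have hmem : x ∈ {h : ℍ[ℝ] | h ≠ 0 ∧ q + h ∈ D} := by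
      refine ⟨hx0, hball ?_⟩
      simpa [dist_eq_norm] using hxball
    have key : f (q + x) - f q - lm L0 x = ((f (q + x) - f q) * x⁻¹ - L0) * x := by
      simp [lm, sub_mul, mul_assoc, inv_mul_cancel₀ hx0]
    rw [key, norm_mul]
    exact mul_le_mul_of_nonneg_right (hx hmem) (norm_nonneg x)

structure SlicePhi (c : ℍ[ℝ]) where
  Φ : ℍ[ℝ] →L[ℝ] ℂ × ℂ
  Ψ : ℂ × ℂ →L[ℝ] ℍ[ℝ]
  inv : ∀ x, Ψ (Φ x) = x
  inv2 : ∀ z, Φ (Ψ z) = z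
  mulc : ∀ x, Φ (x * c) = Complex.I • Φ x

noncomputable def phiI : SlicePhi qI where
  Φ := LinearMap.toContinuousLinearMap
    { toFun := fun x => (⟨x.re, x.imI⟩, ⟨x.imJ, -x.imK⟩)
      map_add' := fun x y => by simp [Prod.ext_iff, Complex.ext_iff]; ring
      map_smul' := fun r x => by simp [Prod.ext_iff, Complex.ext_iff, Complex.real_smul] }
  Ψ := LinearMap.toContinuousLinearMap
    { toFun := fun z => ⟨z.1.re, z.1.im, z.2.re, -z.2.im⟩
      map_add' := fun x y => Quaternion.ext _ _ rfl rfl rfl (neg_add _ _)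
      map_smul' := fun r x => Quaternion.ext _ _ (by show _ = r • x.1.re; simp) (by show _ = r • x.1.im; simp)
        (by show _ = r • x.2.re; simp) (by show _ = r • -x.2.im; simp) }
  inv := fun x => Quaternion.ext _ _ rfl rfl rfl (neg_neg _)
  inv2 := fun z => Prod.ext (Complex.ext rfl rfl) (Complex.ext rfl (neg_neg _))
  mulc := fun x => by
    refine Prod.ext (Complex.ext ?_ ?_) (Complex.ext ?_ ?_)
    · show (x * qI).re = (Complex.I * ⟨x.re, x.imI⟩).re
      rw [Quaternion.re_mul]; simp [qI]
    · show (x * qI).imI = (Complex.I * ⟨x.re, x.imI⟩).im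
      rw [Quaternion.imI_mul]; simp [qI]
    · show (x * qI).imJ = (Complex.I * ⟨x.imJ, -x.imK⟩).re
      rw [Quaternion.imJ_mul]; simp [qI]
    · show -(x * qI).imK = (Complex.I * ⟨x.imJ, -x.imK⟩).im
      rw [Quaternion.imK_mul]; simp [qI]

noncomputable def phiJ : SlicePhi qJ where
  Φ := LinearMap.toContinuousLinearMap
    { toFun := fun x => (⟨x.re, x.imJ⟩, ⟨x.imI, x.imK⟩)
      map_add' := fun x y => by simp [Prod.ext_iff, Complex.ext_iff]
      map_smul' := fun r x => by simp [Prod.ext_iff, Complex.ext_iff, Complex.real_smul] }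
  Ψ := LinearMap.toContinuousLinearMap
    { toFun := fun z => ⟨z.1.re, z.2.re, z.1.im, z.2.im⟩
      map_add' := fun x y => Quaternion.ext _ _ rfl rfl rfl rfl
      map_smul' := fun r x => Quaternion.ext _ _ (by show _ = r • x.1.re; simp) (by show _ = r • x.2.re; simp)
        (by show _ = r • x.1.im; simp) (by show _ = r • x.2.im; simp) }
  inv := fun x => Quaternion.ext _ _ rfl rfl rfl rfl
  inv2 := fun z => Prod.ext (Complex.ext rfl rfl) (Complex.ext rfl rfl)
  mulc := fun x => by
    refine Prod.ext (Complex.ext ?_ ?_) (Complex.ext ?_ ?_)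
    · show (x * qJ).re = (Complex.I * ⟨x.re, x.imJ⟩).re
      rw [Quaternion.re_mul]; simp [qJ]
    · show (x * qJ).imJ = (Complex.I * ⟨x.re, x.imJ⟩).im
      rw [Quaternion.imJ_mul]; simp [qJ]
    · show (x * qJ).imI = (Complex.I * ⟨x.imI, x.imK⟩).re
      rw [Quaternion.imI_mul]; simp [qJ]
    · show (x * qJ).imK = (Complex.I * ⟨x.imI, x.imK⟩).im
      rw [Quaternion.imK_mul]; simp [qJ]

noncomputable def phiK : SlicePhi qK where
  Φ := LinearMap.toContinuousLinearMap
    { toFun := fun x => (⟨x.re, x.imK⟩, ⟨x.imI, -x.imJ⟩)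
      map_add' := fun x y => by simp [Prod.ext_iff, Complex.ext_iff]; ring
      map_smul' := fun r x => by simp [Prod.ext_iff, Complex.ext_iff, Complex.real_smul] }
  Ψ := LinearMap.toContinuousLinearMap
    { toFun := fun z => ⟨z.1.re, z.2.re, -z.2.im, z.1.im⟩
      map_add' := fun x y => Quaternion.ext _ _ rfl rfl (neg_add _ _) rfl
      map_smul' := fun r x => Quaternion.ext _ _ (by show _ = r • x.1.re; simp) (by show _ = r • x.2.re; simp)
        (by show _ = r • -x.2.im; simp) (by show _ = r • x.1.im; simp) }
  inv := fun x => Quaternion.ext _ _ rfl rfl (neg_neg _) rfl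
  inv2 := fun z => Prod.ext (Complex.ext rfl rfl) (Complex.ext rfl (neg_neg _))
  mulc := fun x => by
    refine Prod.ext (Complex.ext ?_ ?_) (Complex.ext ?_ ?_)
    · show (x * qK).re = (Complex.I * ⟨x.re, x.imK⟩).re
      rw [Quaternion.re_mul]; simp [qK]
    · show (x * qK).imK = (Complex.I * ⟨x.re, x.imK⟩).im
      rw [Quaternion.imK_mul]; simp [qK]
    · show (x * qK).imI = (Complex.I * ⟨x.imI, -x.imJ⟩).re
      rw [Quaternion.imI_mul]; simp [qK]
    · show -(x * qK).imJ = (Complex.I * ⟨x.imI, -x.imJ⟩).im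
      rw [Quaternion.imJ_mul]; simp [qK]

lemma SlicePhi.psi_smulI {c : ℍ[ℝ]} (P : SlicePhi c) (z : ℂ × ℂ) :
    P.Ψ (Complex.I • z) = P.Ψ z * c := by
  conv_lhs => rw [← P.inv2 z]
  rw [← P.mulc, P.inv]

/-- Core slice lemma: on a 2-plane `q + x•a + y•b` with `a*c = b`, the function `L` has
line derivatives along `a` and `b` related by right multiplication. -/
lemma slice_deriv {D : Set ℍ[ℝ]} (hD : IsOpen D) {f L : ℍ[ℝ] → ℍ[ℝ]}
    (hL : ∀ p ∈ D, HasFDerivAt f (lm (L p)) p)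
    {a b c : ℍ[ℝ]} (P : SlicePhi c) (hab : a * c = b) (ha : a ≠ 0)
    {q : ℍ[ℝ]} (hq : q ∈ D) :
    ∃ A : ℍ[ℝ], HasDerivAt (fun t : ℝ => L (q + t • a)) A 0 ∧
      HasDerivAt (fun t : ℝ => L (q + t • b)) (A * b * a⁻¹) 0 := by
  set ψ : ℂ → ℍ[ℝ] := fun z => q + z.re • a + z.im • b with hψdef
  have hψcont : Continuous ψ := by fun_prop
  set U : Set ℂ := ψ ⁻¹' D with hU
  have hUopen : IsOpen U := hD.preimage hψcont
  have h0U : (0 : ℂ) ∈ U := by simp [hU, hψdef, hq]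
  set ℓ : ℂ →L[ℝ] ℍ[ℝ] := Complex.reCLM.smulRight a + Complex.imCLM.smulRight b with hℓ
  have hψd : ∀ z : ℂ, HasFDerivAt ψ ℓ z := by
    intro z
    have : HasFDerivAt (fun z : ℂ => z.re • a + z.im • b) ℓ z := ℓ.hasFDerivAt
    simpa [hψdef, add_assoc] using this.const_add q
  set G : ℂ → ℂ × ℂ := fun z => P.Φ (f (ψ z)) with hG
  -- complex differentiability of G
  have key : ∀ z ∈ U, HasDerivAt G (P.Φ (L (ψ z) * a)) z := by
    intro z hz
    have hfd : HasFDerivAt (fun z => P.Φ (f (ψ z)))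
        ((P.Φ.comp (lm (L (ψ z)))).comp ℓ) z :=
      P.Φ.hasFDerivAt.comp z (((hL (ψ z) hz).comp z (hψd z)))
    have heq : ∀ w : ℂ, ((P.Φ.comp (lm (L (ψ z)))).comp ℓ) w
        = w • P.Φ (L (ψ z) * a) := by
      intro w
      have h1 : (ℓ w) = w.re • a + w.im • b := rfl
      have h2 : L (ψ z) * (w.re • a + w.im • b)
          = w.re • (L (ψ z) * a) + w.im • ((L (ψ z) * a) * c) := by
        rw [← hab]; rw [mul_add]; simp [mul_smul_comm, mul_assoc]
      have h3 : P.Φ (L (ψ z) * (w.re • a + w.im • b))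
          = w.re • P.Φ (L (ψ z) * a) + w.im • Complex.I • P.Φ (L (ψ z) * a) := by
        rw [h2, map_add, map_smul, map_smul, P.mulc]
      have h4 : w • P.Φ (L (ψ z) * a)
          = w.re • P.Φ (L (ψ z) * a) + w.im • Complex.I • P.Φ (L (ψ z) * a) := by
        set v := P.Φ (L (ψ z) * a)
        have hre : ∀ (r : ℝ) (u : ℂ × ℂ), (r : ℂ) • u = r • u := fun r u => by
          rw [show ((r : ℂ)) = algebraMap ℝ ℂ r from rfl, algebraMap_smul]
        calc w • v = ((w.re : ℂ) + (w.im : ℂ) * Complex.I) • v := by rw [Complex.re_add_im]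
          _ = (w.re : ℂ) • v + ((w.im : ℂ) * Complex.I) • v := add_smul _ _ _
          _ = w.re • v + w.im • Complex.I • v := by rw [mul_smul, hre w.re v, hre w.im (Complex.I • v)]
      simp only [ContinuousLinearMap.comp_apply, h1]
      rw [h4, ← h3]; rfl
    have hM : (ContinuousLinearMap.smulRight (1 : ℂ →L[ℂ] ℂ)
        (P.Φ (L (ψ z) * a))).restrictScalars ℝ = (P.Φ.comp (lm (L (ψ z)))).comp ℓ := by
      refine ContinuousLinearMap.ext fun w => ?_
      simp only [ContinuousLinearMap.coe_restrictScalars', ContinuousLinearMap.smulRight_apply,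
        ContinuousLinearMap.one_apply, heq w]
    have := hasFDerivAt_of_restrictScalars ℝ hfd hM
    simpa using this.hasDerivAt
  -- analyticity
  have hdiff : DifferentiableOn ℂ G U := fun z hz =>
    ((key z hz).differentiableAt).differentiableWithinAt
  have hanG : AnalyticOnNhd ℂ G U := hdiff.analyticOnNhd hUopen
  have hanG' : AnalyticOnNhd ℂ (deriv G) U := hanG.deriv
  have hG'd : DifferentiableAt ℂ (deriv G) 0 := (hanG' 0 h0U).differentiableAt
  set B := deriv (deriv G) 0 with hBdef
  have hB : HasDerivAt (deriv G) B 0 := hG'd.hasDerivAt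
  have hGeq : ∀ z ∈ U, deriv G z = P.Φ (L (ψ z) * a) := fun z hz => (key z hz).deriv
  have hH : HasDerivAt (fun z => P.Φ (L (ψ z) * a)) B 0 := by
    apply hB.congr_of_eventuallyEq
    filter_upwards [hUopen.mem_nhds h0U] with z hz using (hGeq z hz).symm
  have h1 : HasDerivAt (fun t : ℝ => (t : ℂ)) 1 0 := by
    exact Complex.ofRealCLM.hasDerivAt (x := (0:ℝ))
  -- a-direction
  have hra : HasDerivAt (fun t : ℝ => P.Φ (L (ψ t) * a)) B 0 := by
    have := HasDerivAt.scomp_of_eq (h := fun t : ℝ => (t : ℂ)) (hg := hH) (hh := h1) (hy := by simp)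
    rw [one_smul] at this; exact this
  have hra2 : HasDerivAt (fun t : ℝ => P.Ψ (P.Φ (L (ψ t) * a)) * a⁻¹)
      (P.Ψ B * a⁻¹) 0 :=
    (P.Ψ.hasFDerivAt.comp_hasDerivAt 0 hra).mul_const a⁻¹
  have hfa : (fun t : ℝ => P.Ψ (P.Φ (L (ψ t) * a)) * a⁻¹) = fun t : ℝ => L (q + t • a) := by
    funext t
    rw [P.inv, mul_assoc, mul_inv_cancel₀ ha, mul_one]
    simp [hψdef]
  -- b-direction
  have h2 : HasDerivAt (fun t : ℝ => (t : ℂ) * Complex.I) Complex.I 0 := by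
    simpa using h1.mul_const Complex.I
  have hrb : HasDerivAt (fun t : ℝ => P.Φ (L (ψ ((t : ℂ) * Complex.I)) * a)) (Complex.I • B) 0 := by
    have := HasDerivAt.scomp_of_eq (h := fun t : ℝ => (t : ℂ) * Complex.I) (hg := hH) (hh := h2) (hy := by simp)
    exact this
  have hrb2 : HasDerivAt (fun t : ℝ => P.Ψ (P.Φ (L (ψ ((t : ℂ) * Complex.I)) * a)) * a⁻¹)
      (P.Ψ (Complex.I • B) * a⁻¹) 0 :=
    (P.Ψ.hasFDerivAt.comp_hasDerivAt 0 hrb).mul_const a⁻¹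
  have hfb : (fun t : ℝ => P.Ψ (P.Φ (L (ψ ((t : ℂ) * Complex.I)) * a)) * a⁻¹)
      = fun t : ℝ => L (q + t • b) := by
    funext t
    rw [P.inv, mul_assoc, mul_inv_cancel₀ ha, mul_one]
    simp [hψdef]
  refine ⟨P.Ψ B * a⁻¹, ?_, ?_⟩
  · rw [← hfa]; exact hra2
  · have hval : P.Ψ (Complex.I • B) * a⁻¹ = P.Ψ B * a⁻¹ * b * a⁻¹ := by
      rw [P.psi_smulI, ← hab, mul_assoc (P.Ψ B) a⁻¹ (a * c), inv_mul_cancel_left₀ ha]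
    rw [← hfb, ← hval]; exact hrb2

section const

variable {D : Set ℍ[ℝ]} {g : ℍ[ℝ] → ℍ[ℝ]}

/-- constancy along segments inside a ball -/
lemma segment_const (hD : IsOpen D)
    (hg : ∀ p ∈ D, ∀ e ∈ ({1, qI, qJ, qK} : Set ℍ[ℝ]),
      HasDerivAt (fun t : ℝ => g (p + t • e)) 0 0)
    {x : ℍ[ℝ]} {r : ℝ} (hball : ball x r ⊆ D)
    {p e : ℍ[ℝ]} (he : e ∈ ({1, qI, qJ, qK} : Set ℍ[ℝ])) {d : ℝ}
    (hp : p ∈ ball x r) (hpd : p + d • e ∈ ball x r) :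
    g (p + d • e) = g p := by
  set I : Set ℝ := (fun t : ℝ => p + t • e) ⁻¹' (ball x r) with hI
  have haff : (fun t : ℝ => p + t • e) = fun t => AffineMap.lineMap p (p + e) t := by
    funext t; simp [AffineMap.lineMap_apply, add_comm]
  have hIconv : Convex ℝ I := by
    rw [hI, haff]
    exact (convex_ball x r).affine_preimage (AffineMap.lineMap p (p + e))
  have hIopen : IsOpen I := isOpen_ball.preimage (by fun_prop)
  have hderiv : ∀ t ∈ I, HasDerivAt (fun s : ℝ => g (p + s • e)) 0 t := by
    intro t ht
    have hmem : p + t • e ∈ D := hball ht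
    have h0 := hg _ hmem e he
    have hcomp := HasDerivAt.scomp_of_eq (h := fun u : ℝ => u - t)
      (hg := h0) (hh := by simpa using (hasDerivAt_id t).sub_const t) (hy := by simp)
    have hfun : ((fun s : ℝ => g (p + t • e + s • e)) ∘ fun u : ℝ => u - t)
        = fun s : ℝ => g (p + s • e) := by
      funext u
      simp only [Function.comp_apply, sub_smul, add_assoc]
      congr 2
      abel
    rw [hfun] at hcomp
    simpa using hcomp
  have hdiff : DifferentiableOn ℝ (fun s : ℝ => g (p + s • e)) I := fun t ht =>
    ((hderiv t ht).differentiableAt).differentiableWithinAt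
  have hzero : ∀ t ∈ I, fderivWithin ℝ (fun s : ℝ => g (p + s • e)) I t = 0 := by
    intro t ht
    rw [fderivWithin_of_isOpen hIopen ht, (hderiv t ht).hasFDerivAt.fderiv]
    exact ContinuousLinearMap.ext fun w => by simp
  have h0I : (0 : ℝ) ∈ I := by simpa [hI] using hp
  have hdI : d ∈ I := by simpa [hI] using hpd
  have := hIconv.is_const_of_fderivWithin_eq_zero hdiff hzero hdI h0I
  simpa using this

lemma ball_const (hD : IsOpen D)
    (hg : ∀ p ∈ D, ∀ e ∈ ({1, qI, qJ, qK} : Set ℍ[ℝ]),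
      HasDerivAt (fun t : ℝ => g (p + t • e)) 0 0)
    {x : ℍ[ℝ]} {r : ℝ} (hball : ball x r ⊆ D) {y : ℍ[ℝ]} (hy : y ∈ ball x r) :
    g y = g x := by
  set d := y - x with hd
  have hdr : ‖d‖ < r := by simpa [hd, dist_eq_norm] using hy
  have hnorm : ∀ w : ℍ[ℝ], ‖w‖ * ‖w‖ = w.re^2 + w.imI^2 + w.imJ^2 + w.imK^2 := by
    intro w; rw [← Quaternion.normSq_eq_norm_mul_self, Quaternion.normSq_def']
  have hle : ∀ w : ℍ[ℝ], w.re^2 + w.imI^2 + w.imJ^2 + w.imK^2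
      ≤ d.re^2 + d.imI^2 + d.imJ^2 + d.imK^2 → ‖w‖ < r := by
    intro w hw
    have h1 := hnorm w
    have h2 := hnorm d
    nlinarith [norm_nonneg w, norm_nonneg d]
  set p1 := x + d.re • (1 : ℍ[ℝ]) with hp1
  set p2 := p1 + d.imI • qI with hp2
  set p3 := p2 + d.imJ • qJ with hp3
  have hxball : x ∈ ball x r := by
    simp only [mem_ball, dist_self]; linarith [norm_nonneg d]
  have hm1 : p1 ∈ ball x r := by
    have : p1 - x = (⟨d.re, 0, 0, 0⟩ : ℍ[ℝ]) := by
      ext <;> simp [hp1]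
    rw [mem_ball, dist_eq_norm, this]
    exact hle _ (by simp [Quaternion.ext_iff]; nlinarith [sq_nonneg d.imI, sq_nonneg d.imJ, sq_nonneg d.imK])
  have hm2 : p2 ∈ ball x r := by
    have : p2 - x = (⟨d.re, d.imI, 0, 0⟩ : ℍ[ℝ]) := by
      ext <;> simp [hp2, hp1] <;> simp [qI]
    rw [mem_ball, dist_eq_norm, this]
    exact hle _ (by simp [Quaternion.ext_iff]; nlinarith [sq_nonneg d.imJ, sq_nonneg d.imK])
  have hm3 : p3 ∈ ball x r := by
    have : p3 - x = (⟨d.re, d.imI, d.imJ, 0⟩ : ℍ[ℝ]) := by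
      ext <;> simp [hp3, hp2, hp1] <;> simp [qI, qJ]
    rw [mem_ball, dist_eq_norm, this]
    exact hle _ (by simp [Quaternion.ext_iff]; nlinarith [sq_nonneg d.imK])
  have hm4 : p3 + d.imK • qK = y := by
    ext <;> simp [hp3, hp2, hp1, hd] <;> simp [qI, qJ, qK]
  have s1 : g p1 = g x := segment_const hD hg hball (by simp) hxball (by rwa [← hp1])
  have s2 : g p2 = g p1 := segment_const hD hg hball (by simp) hm1 (by rwa [← hp2])
  have s3 : g p3 = g p2 := segment_const hD hg hball (by simp) hm2 (by rwa [← hp3])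
  have s4 : g y = g p3 := by
    rw [← hm4]
    exact segment_const hD hg hball (by simp) hm3 (by rwa [hm4])
  rw [s4, s3, s2, s1]

lemma const_of_line_derivs_zero (hD : IsOpen D) (hconn : IsPreconnected D)
    (hg : ∀ p ∈ D, ∀ e ∈ ({1, qI, qJ, qK} : Set ℍ[ℝ]),
      HasDerivAt (fun t : ℝ => g (p + t • e)) 0 0)
    {x y : ℍ[ℝ]} (hx : x ∈ D) (hy : y ∈ D) : g y = g x := by
  by_contra hne
  set u : Set ℍ[ℝ] := {p | ∃ r > 0, ball p r ⊆ D ∧ g p = g x} with hu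
  set v : Set ℍ[ℝ] := {p | ∃ r > 0, ball p r ⊆ D ∧ g p ≠ g x} with hv
  have hop : ∀ (P : ℍ[ℝ] → Prop), IsOpen {p | ∃ r > 0, ball p r ⊆ D ∧ P p} → True := fun _ _ => trivial
  have hopen : ∀ w : Set ℍ[ℝ], (w = u ∨ w = v) → IsOpen w := by
    rintro w (rfl | rfl) <;>
    · rw [Metric.isOpen_iff]
      rintro p ⟨r, hr, hbD, hgp⟩
      refine ⟨r, hr, fun z hz => ?_⟩
      have hgz : g z = g p := ball_const hD hg hbD hz
      have hzr : 0 < r - dist z p := by simp at hz; linarith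
      exact ⟨r - dist z p, hzr, fun w hw => hbD (by
        rw [mem_ball] at *
        calc dist w p ≤ dist w z + dist z p := dist_triangle _ _ _
          _ < r := by linarith), by rw [hgz]; exact hgp⟩
  have hsub : D ⊆ u ∪ v := by
    intro p hp
    obtain ⟨r, hr, hbD⟩ := Metric.isOpen_iff.1 hD p hp
    by_cases hgp : g p = g x
    · exact Or.inl ⟨r, hr, hbD, hgp⟩
    · exact Or.inr ⟨r, hr, hbD, hgp⟩
  have hxu : x ∈ D ∩ u := by
    obtain ⟨r, hr, hbD⟩ := Metric.isOpen_iff.1 hD x hx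
    exact ⟨hx, r, hr, hbD, rfl⟩
  have hyv : y ∈ D ∩ v := by
    obtain ⟨r, hr, hbD⟩ := Metric.isOpen_iff.1 hD y hy
    exact ⟨hy, r, hr, hbD, hne⟩
  obtain ⟨z, _, ⟨r1, _, _, hz1⟩, ⟨r2, _, _, hz2⟩⟩ :=
    hconn u v (hopen u (Or.inl rfl)) (hopen v (Or.inr rfl)) hsub ⟨x, hxu⟩ ⟨y, hyv⟩
  exact hz2 hz1

end const

theorem left_quotient_limit_implies_affine
    (D : Set ℍ[ℝ]) (hD : IsOpen D) (hDconn : IsConnected D) (f : ℍ[ℝ] → ℍ[ℝ])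
    (hlim : ∀ q ∈ D, ∃ L : ℍ[ℝ],
      Tendsto (fun h : ℍ[ℝ] => (f (q + h) - f q) * h⁻¹)
        (𝓝[{h : ℍ[ℝ] | h ≠ 0 ∧ q + h ∈ D}] 0) (𝓝 L)) :
    ∃ ω lam : ℍ[ℝ], ∀ q ∈ D, f q = ω * q + lam := by
  have hIne : qI ≠ 0 := by intro h; rw [Quaternion.ext_iff] at h; simp [qI] at h
  have hJne : qJ ≠ 0 := by intro h; rw [Quaternion.ext_iff] at h; simp [qJ] at h
  have hKne : qK ≠ 0 := by intro h; rw [Quaternion.ext_iff] at h; simp [qK] at h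
  set L : ℍ[ℝ] → ℍ[ℝ] := fun q => fderiv ℝ f q 1 with hLdef
  have hL : ∀ p ∈ D, HasFDerivAt f (lm (L p)) p := by
    intro p hp
    obtain ⟨L0, hL0⟩ := hlim p hp
    have hfd := hasFDerivAt_of_quotient hD hp hL0
    have : L p = L0 := by
      rw [hLdef]; simp only [hfd.fderiv]; simp [lm]
    rwa [this]
  -- all line derivatives of L vanish on D
  have hLzero : ∀ p ∈ D, ∀ e ∈ ({1, qI, qJ, qK} : Set ℍ[ℝ]),
      HasDerivAt (fun t : ℝ => L (p + t • e)) 0 0 := by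
    intro q hq
    obtain ⟨A1, h1a, h1b⟩ := slice_deriv hD hL phiI (one_mul qI) one_ne_zero hq
    obtain ⟨A2, h2a, h2b⟩ := slice_deriv hD hL phiJ (one_mul qJ) one_ne_zero hq
    obtain ⟨A3, h3a, h3b⟩ := slice_deriv hD hL phiK (one_mul qK) one_ne_zero hq
    obtain ⟨A4, h4a, h4b⟩ := slice_deriv hD hL phiK
      (show qJ * qK = qI by ext <;> simp [Quaternion.re_mul, Quaternion.imI_mul, Quaternion.imJ_mul, Quaternion.imK_mul] <;> simp [qI, qJ, qK]) hJne hq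
    have e21 : A2 = A1 := h2a.unique h1a
    have e31 : A3 = A1 := h3a.unique h1a
    have e42 : A4 = A2 * qJ * 1⁻¹ := h4a.unique h2b
    have e14 : A1 * qI * 1⁻¹ = A4 * qI * qJ⁻¹ := h1b.unique h4b
    rw [inv_one, mul_one] at e42
    rw [inv_one, mul_one, e42, e21] at e14
    -- A1 * qI = A1 * qJ * qI * qJ⁻¹
    have e5 : A1 * qI * qJ = A1 * qJ * qI := by
      rw [e14, inv_mul_cancel_right₀ hJne]
    rw [mul_assoc, mul_assoc, show qI * qJ = qK by ext <;> simp [Quaternion.re_mul, Quaternion.imI_mul, Quaternion.imJ_mul, Quaternion.imK_mul] <;> simp [qI, qJ, qK],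
      show qJ * qI = -qK by ext <;> simp [Quaternion.re_mul, Quaternion.imI_mul, Quaternion.imJ_mul, Quaternion.imK_mul] <;> simp [qI, qJ, qK], mul_neg] at e5
    have hA1K : A1 * qK = 0 := by
      have h2 : A1 * qK + A1 * qK = 0 := by nth_rewrite 1 [e5]; exact neg_add_cancel _
      rw [← two_smul ℝ] at h2
      exact (smul_eq_zero.mp h2).resolve_left (by norm_num)
    have hA1 : A1 = 0 := by
      rcases mul_eq_zero.mp hA1K with h | h
      · exact h
      · exact absurd h hKne
    intro e he
    rcases he with rfl | rfl | rfl | rfl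
    · rwa [hA1] at h1a
    · rw [show (0:ℍ[ℝ]) = A1 * qI * 1⁻¹ by rw [hA1]; simp]; exact h1b
    · rw [show (0:ℍ[ℝ]) = A2 * qJ * 1⁻¹ by rw [e21, hA1]; simp]; exact h2b
    · rw [show (0:ℍ[ℝ]) = A3 * qK * 1⁻¹ by rw [e31, hA1]; simp]; exact h3b
  -- L is constant on D
  obtain ⟨q0, hq0⟩ := hDconn.nonempty
  set ω := L q0 with hω
  have hLconst : ∀ q ∈ D, L q = ω :=
    fun q hq => const_of_line_derivs_zero hD hDconn.isPreconnected hLzero hq0 hq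
  -- g := f - ω * · has zero line derivatives
  set g : ℍ[ℝ] → ℍ[ℝ] := fun q => f q - ω * q with hg
  have hgzero : ∀ p ∈ D, ∀ e ∈ ({1, qI, qJ, qK} : Set ℍ[ℝ]),
      HasDerivAt (fun t : ℝ => g (p + t • e)) 0 0 := by
    intro p hp e _
    have hline : HasDerivAt (fun t : ℝ => p + t • e) e 0 := by
      simpa using ((hasDerivAt_id (0:ℝ)).smul_const e).const_add p
    have hf1 : HasDerivAt (fun t : ℝ => f (p + t • e)) (ω * e) 0 := by
      have hp' : p + (0:ℝ) • e = p := by simp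
      have hfd : HasFDerivAt f (lm (L p)) (p + (0:ℝ) • e) := by rw [hp']; exact hL p hp
      have := hfd.comp_hasDerivAt 0 hline
      rw [show (lm (L p)) e = ω * e by simp [lm, hLconst p hp]] at this; exact this
    have hf2 : HasDerivAt (fun t : ℝ => ω * (p + t • e)) (ω * e) 0 :=
      hline.const_mul ω
    have := hf1.sub hf2; rw [sub_self] at this; exact this
  refine ⟨ω, g q0, fun q hq => ?_⟩
  have hgc : g q = g q0 := const_of_line_derivs_zero hD hDconn.isPreconnected hgzero hq0 hq
  rw [← hgc]
  show f q = ω * q + (f q - ω * q)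
  abel

end
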